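/- Let E be a real inner product space and let a, b, c, a′, b′, c′ ∈ E be points with a ≠ b, c ≠ b, a′ ≠ b′, and c′ ≠ b′ (so all four bone vectors are nonzero). Then sin(angle(a − b, a′ − b′)) ≤ (‖a′ − a‖ + ‖b′ − b‖) / ‖a − b‖, and consequently angle(a′ − b′, c′ − b′) ≤ angle(a − b, c − b) + angle(a − b, a′ − b′) + angle(c − b, c′ − b′), where sin(angle(c − b, c′ − b′)) ≤ (‖c′ − c‖ + ‖b′ − b‖) / ‖c − b‖. -/
import Mathlib


open InnerProductGeometry

local notation "⟪" x ", " y "⟫" => @inner ℝ _ _ x y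

private lemma sin_angle_nonneg' {E : Type*} [NormedAddCommGroup E]
    [InnerProductSpace ℝ E] (x y : E) : 0 ≤ Real.sin (angle x y) :=
  Real.sin_nonneg_of_nonneg_of_le_pi (angle_nonneg x y) (angle_le_pi x y)

private lemma sin_angle_mul_norm_le {E : Type*} [NormedAddCommGroup E]
    [InnerProductSpace ℝ E] (x y : E) :
    Real.sin (angle x y) * ‖x‖ * ‖y‖ ≤ ‖x - y‖ * ‖y‖ := by
  have h := sin_angle_mul_norm_mul_norm x y
  have h1 : Real.sin (angle x y) * ‖x‖ * ‖y‖ =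
      Real.sqrt (⟪x, x⟫ * ⟪y, y⟫ - ⟪x, y⟫ * ⟪x, y⟫) := by
    rw [mul_assoc, h]
  rw [h1]
  have h2 : ⟪x, x⟫ * ⟪y, y⟫ - ⟪x, y⟫ * ⟪x, y⟫ ≤ (‖x - y‖ * ‖y‖) ^ 2 := by
    have e1 : ‖x - y‖ ^ 2 = ‖x‖ ^ 2 - 2 * ⟪x, y⟫ + ‖y‖ ^ 2 := by
      rw [norm_sub_sq_real]
    have e2 : ⟪x, x⟫ = ‖x‖ ^ 2 := real_inner_self_eq_norm_sq x
    have e3 : ⟪y, y⟫ = ‖y‖ ^ 2 := real_inner_self_eq_norm_sq y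
    nlinarith [sq_nonneg (‖y‖ ^ 2 - ⟪x, y⟫)]
  calc Real.sqrt (⟪x, x⟫ * ⟪y, y⟫ - ⟪x, y⟫ * ⟪x, y⟫)
      ≤ Real.sqrt ((‖x - y‖ * ‖y‖) ^ 2) := Real.sqrt_le_sqrt h2
    _ = ‖x - y‖ * ‖y‖ := Real.sqrt_sq (by positivity)

private lemma sin_angle_le_div {E : Type*} [NormedAddCommGroup E]
    [InnerProductSpace ℝ E] {x : E} (y : E) (hx : x ≠ 0) :
    Real.sin (angle x y) ≤ ‖x - y‖ / ‖x‖ := by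
  have hx' : (0 : ℝ) < ‖x‖ := norm_pos_iff.mpr hx
  rw [le_div_iff₀ hx']
  by_cases hy : y = 0
  · subst hy
    simp [angle_zero_right, Real.sin_pi_div_two, sub_zero]
  · have hy' : (0 : ℝ) < ‖y‖ := norm_pos_iff.mpr hy
    have h := sin_angle_mul_norm_le x y
    have := mul_le_mul_of_nonneg_right h (le_of_lt (inv_pos.mpr hy'))
    calc Real.sin (angle x y) * ‖x‖
        = Real.sin (angle x y) * ‖x‖ * ‖y‖ * ‖y‖⁻¹ := by field_simp
      _ ≤ ‖x - y‖ * ‖y‖ * ‖y‖⁻¹ := this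
      _ = ‖x - y‖ := by field_simp

private lemma angle_triangle_unit {E : Type*} [NormedAddCommGroup E]
    [InnerProductSpace ℝ E] {x y z : E} (hx : ‖x‖ = 1) (hy : ‖y‖ = 1) (hz : ‖z‖ = 1) :
    angle x z ≤ angle x y + angle y z := by
  by_cases hp : angle x y + angle y z ≤ Real.pi
  · have hcxy : Real.cos (angle x y) = ⟪x, y⟫ := by rw [cos_angle, hx, hy]; simp
    have hcyz : Real.cos (angle y z) = ⟪y, z⟫ := by rw [cos_angle, hy, hz]; simp
    have hcxz : Real.cos (angle x z) = ⟪x, z⟫ := by rw [cos_angle, hx, hz]; simp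
    have hyy : ⟪y, y⟫ = (1 : ℝ) := by
      rw [real_inner_self_eq_norm_sq, hy]; norm_num
    have hinner : ⟪x - ⟪x, y⟫ • y, z - ⟪y, z⟫ • y⟫ = ⟪x, z⟫ - ⟪x, y⟫ * ⟪y, z⟫ := by
      simp only [inner_sub_left, inner_sub_right, real_inner_smul_left,
        real_inner_smul_right]
      rw [hyy]; ring
    have hnxp : ‖x - ⟪x, y⟫ • y‖ ^ 2 = 1 - ⟪x, y⟫ ^ 2 := by
      rw [← real_inner_self_eq_norm_sq]
      simp only [inner_sub_left, inner_sub_right, real_inner_smul_left,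
        real_inner_smul_right]
      rw [hyy, real_inner_self_eq_norm_sq, hx, real_inner_comm y x]
      ring
    have hnzp : ‖z - ⟪y, z⟫ • y‖ ^ 2 = 1 - ⟪y, z⟫ ^ 2 := by
      rw [← real_inner_self_eq_norm_sq]
      simp only [inner_sub_left, inner_sub_right, real_inner_smul_left,
        real_inner_smul_right]
      rw [hyy, real_inner_self_eq_norm_sq, hz, real_inner_comm y z]
      ring
    have hsxy : Real.sin (angle x y) = ‖x - ⟪x, y⟫ • y‖ := by
      have h1 : Real.sin (angle x y) ^ 2 = 1 - ⟪x, y⟫ ^ 2 := by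
        have := Real.sin_sq_add_cos_sq (angle x y)
        rw [hcxy] at this; linarith
      nlinarith [norm_nonneg (x - ⟪x, y⟫ • y), sin_angle_nonneg' x y]
    have hsyz : Real.sin (angle y z) = ‖z - ⟪y, z⟫ • y‖ := by
      have h1 : Real.sin (angle y z) ^ 2 = 1 - ⟪y, z⟫ ^ 2 := by
        have := Real.sin_sq_add_cos_sq (angle y z)
        rw [hcyz] at this; linarith
      nlinarith [norm_nonneg (z - ⟪y, z⟫ • y), sin_angle_nonneg' y z]
    have hcs : ⟪x, y⟫ * ⟪y, z⟫ - ‖x - ⟪x, y⟫ • y‖ * ‖z - ⟪y, z⟫ • y‖ ≤ ⟪x, z⟫ := by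
      have h := abs_real_inner_le_norm (x - ⟪x, y⟫ • y) (z - ⟪y, z⟫ • y)
      rw [hinner] at h
      have := abs_le.mp h
      linarith [this.1]
    have hkey : Real.cos (angle x y + angle y z) ≤ Real.cos (angle x z) := by
      rw [Real.cos_add, hcxy, hcyz, hcxz, hsxy, hsyz]
      linarith
    by_contra hlt
    push_neg at hlt
    have h1 : Real.cos (angle x z) < Real.cos (angle x y + angle y z) :=
      Real.strictAntiOn_cos
        ⟨add_nonneg (angle_nonneg x y) (angle_nonneg y z), hp⟩
        ⟨angle_nonneg x z, angle_le_pi x z⟩ hlt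
    linarith
  · push_neg at hp
    linarith [angle_le_pi x z]

private lemma angle_triangle' {E : Type*} [NormedAddCommGroup E]
    [InnerProductSpace ℝ E] {x y z : E} (hx : x ≠ 0) (hy : y ≠ 0) (hz : z ≠ 0) :
    angle x z ≤ angle x y + angle y z := by
  have hx' : (0 : ℝ) < ‖x‖⁻¹ := inv_pos.mpr (norm_pos_iff.mpr hx)
  have hy' : (0 : ℝ) < ‖y‖⁻¹ := inv_pos.mpr (norm_pos_iff.mpr hy)
  have hz' : (0 : ℝ) < ‖z‖⁻¹ := inv_pos.mpr (norm_pos_iff.mpr hz)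
  have hn : ∀ w : E, w ≠ 0 → ‖(‖w‖⁻¹ : ℝ) • w‖ = 1 := fun w hw => by
    rw [norm_smul, norm_inv, norm_norm, inv_mul_cancel₀ (norm_ne_zero_iff.mpr hw)]
  have h := angle_triangle_unit (hn x hx) (hn y hy) (hn z hz)
  rwa [angle_smul_left_of_pos _ _ hx', angle_smul_right_of_pos _ _ hz',
    angle_smul_left_of_pos _ _ hx', angle_smul_right_of_pos _ _ hy',
    angle_smul_left_of_pos _ _ hy', angle_smul_right_of_pos _ _ hz'] at h

/-- The paper's upper bound `J′` on the change of a joint angle: for joints `a, b, c` and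
their perturbed positions `a′, b′, c′`, the sine of the change of each bone direction is
bounded by the sum of the corresponding joint-displacement norms divided by the original
bone length, and the perturbed joint angle at `b′` exceeds the original joint angle at `b`
by at most the sum of the two bone-direction angle changes. -/
theorem joint_angle_change_bound
    {E : Type*} [NormedAddCommGroup E] [InnerProductSpace ℝ E]
    (a b c a' b' c' : E) (hab : a ≠ b) (hcb : c ≠ b) (hab' : a' ≠ b') (hcb' : c' ≠ b') :
    Real.sin (angle (a - b) (a' - b')) ≤ (‖a' - a‖ + ‖b' - b‖) / ‖a - b‖ ∧
    angle (a' - b') (c' - b') ≤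
      angle (a - b) (c - b) + angle (a - b) (a' - b') + angle (c - b) (c' - b') ∧
    Real.sin (angle (c - b) (c' - b')) ≤ (‖c' - c‖ + ‖b' - b‖) / ‖c - b‖ := by
  have hu : a - b ≠ 0 := sub_ne_zero.mpr hab
  have hv : c - b ≠ 0 := sub_ne_zero.mpr hcb
  have hu' : a' - b' ≠ 0 := sub_ne_zero.mpr hab'
  have hv' : c' - b' ≠ 0 := sub_ne_zero.mpr hcb'
  have sine_bound : ∀ x y x' y' : E, x - y ≠ 0 →
      Real.sin (angle (x - y) (x' - y')) ≤ (‖x' - x‖ + ‖y' - y‖) / ‖x - y‖ := by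
    intro x y x' y' hxy
    have h1 := sin_angle_le_div (x' - y') hxy
    have h2 : ‖x - y - (x' - y')‖ ≤ ‖x' - x‖ + ‖y' - y‖ := by
      have he : x - y - (x' - y') = (x - x') - (y - y') := by abel
      rw [he]
      calc ‖(x - x') - (y - y')‖ ≤ ‖x - x'‖ + ‖y - y'‖ := norm_sub_le _ _
        _ = ‖x' - x‖ + ‖y' - y‖ := by rw [norm_sub_rev x, norm_sub_rev y]
    refine h1.trans ?_
    gcongr
  refine ⟨sine_bound a b a' b' hu, ?_, sine_bound c b c' b' hv⟩
  have t1 : angle (a' - b') (c' - b') ≤ angle (a' - b') (a - b) + angle (a - b) (c' - b') :=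
    angle_triangle' hu' hu hv'
  have t2 : angle (a - b) (c' - b') ≤ angle (a - b) (c - b) + angle (c - b) (c' - b') :=
    angle_triangle' hu hv hv'
  have := angle_comm (a' - b') (a - b)
  linarith
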